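/- For every cyclic flat Z0 of M⁺, either Z0 − e is a cyclic flat of M, or γ_M(Z0 − e) = 0. -/

import Mathlib

open Set Matroid
open scoped Classical
set_option linter.unusedSectionVars false

namespace Paper

variable {α : Type*}

/-- A circuit of a matroid: a minimal dependent set. -/
def Circuit (M : Matroid α) (C : Set α) : Prop :=
  M.Dep C ∧ ∀ D ⊂ C, M.Indep D

/-- A coloop: an element of the ground set lying in no circuit. -/
def Coloop (M : Matroid α) (x : α) : Prop :=
  x ∈ M.E ∧ ∀ C, Circuit M C → x ∉ C

/-- The set of coloops of a matroid. -/
def coloops (M : Matroid α) : Set α := {x | Coloop M x}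

/-- A cyclic set: a subset of the ground set each of whose elements lies in a
circuit contained in the set (equivalently, the restriction has no coloops). -/
def Cyclic (M : Matroid α) (X : Set α) : Prop :=
  X ⊆ M.E ∧ ∀ x ∈ X, ∃ C, Circuit M C ∧ C ⊆ X ∧ x ∈ C

/-- A cyclic flat: a cyclic set that is also a flat. -/
def CyclicFlat (M : Matroid α) (X : Set α) : Prop :=
  Cyclic M X ∧ M.IsFlat X

/-- The rank of a set: the largest cardinality of an independent subset. -/
noncomputable def rk (M : Matroid α) (X : Set α) : ℕ :=
  sSup (Set.ncard '' {I | M.Indep I ∧ I ⊆ X})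

/-- The nullity of a set: `n(X) = |X| − r(X)`. -/
noncomputable def nullity (M : Matroid α) (X : Set α) : ℤ :=
  (X.ncard : ℤ) - rk M X

/-- Deletion of a single element: `M \ e`. -/
noncomputable def deleteElem (M : Matroid α) (e : α) : Matroid α :=
  M ↾ (M.E \ {e})

variable [Fintype α] [DecidableEq α]

/-- The `γ` function: `γ_M(X) = n(X) − Σ_{Z ∈ Z(M), Z ⊊ X} γ_M(Z)`. -/
noncomputable def gamma (M : Matroid α) (X : Finset α) : ℤ :=
  nullity M ↑X -
    ∑ Z ∈ (Finset.univ.filter (fun Z : Finset α => CyclicFlat M ↑Z ∧ Z ⊂ X)).attach,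
      gamma M Z.1
termination_by X.card
decreasing_by
  exact Finset.card_lt_card (Finset.mem_filter.mp Z.2).2.2


lemma exists_circuit_subset_aux [Fintype α] {M : Matroid α} :
    ∀ (n : ℕ) (X : Set α), X.ncard ≤ n → M.Dep X → ∃ C, Circuit M C ∧ C ⊆ X := by
  intro n
  induction n with
  | zero =>
    intro X hn hX
    have hXe : X = ∅ := (Set.ncard_eq_zero (Set.toFinite X)).mp (Nat.le_zero.mp hn)
    exact absurd (hXe ▸ M.empty_indep) hX.1
  | succ n ih =>
    intro X hn hX
    by_cases h : ∀ D ⊂ X, M.Indep D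
    · exact ⟨X, ⟨hX, h⟩, subset_rfl⟩
    · push_neg at h
      obtain ⟨D, hDX, hD⟩ := h
      have hDdep : M.Dep D := ⟨hD, hDX.subset.trans hX.subset_ground⟩
      have hcard : D.ncard ≤ n := by
        have := Set.ncard_lt_ncard hDX (Set.toFinite X); omega
      obtain ⟨C, hC, hCD⟩ := ih D hcard hDdep
      exact ⟨C, hC, hCD.trans hDX.subset⟩

lemma exists_circuit_subset [Fintype α] {M : Matroid α} {X : Set α} (hX : M.Dep X) :
    ∃ C, Circuit M C ∧ C ⊆ X :=
  exists_circuit_subset_aux X.ncard X le_rfl hX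

lemma Circuit.subset_closure_diff {M : Matroid α} {C : Set α} {x : α}
    (hC : Circuit M C) (hx : x ∈ C) : C ⊆ M.closure (C \ {x}) := by
  have hI : M.Indep (C \ {x}) := hC.2 _ (Set.sdiff_singleton_ssubset.mpr hx)
  have hxcl : x ∈ M.closure (C \ {x}) := by
    have hdep : M.Dep (insert x (C \ {x})) := by
      rw [Set.insert_diff_singleton, Set.insert_eq_of_mem hx]; exact hC.1
    exact (hI.insert_dep_iff.mp hdep).1
  intro y hy
  rcases eq_or_ne y x with rfl | hne
  · exact hxcl
  · exact M.subset_closure _ hI.subset_ground ⟨hy, hne⟩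

lemma exists_circuit_of_mem_closure [Fintype α] {M : Matroid α} {X : Set α} {x : α}
    (hX : X ⊆ M.E) (hx : x ∈ M.closure X) (hxX : x ∉ X) :
    ∃ C, Circuit M C ∧ x ∈ C ∧ C ⊆ insert x X := by
  obtain ⟨I, hI⟩ := M.exists_isBasis X hX
  have hxI : x ∉ I := fun h => hxX (hI.subset h)
  have hdep : M.Dep (insert x I) :=
    hI.indep.insert_dep_iff.mpr ⟨by rw [hI.closure_eq_closure]; exact hx, hxI⟩
  obtain ⟨C, hC, hCI⟩ := exists_circuit_subset hdep
  have hxC : x ∈ C := by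
    by_contra h
    have hsub : C ⊆ I := fun y hy =>
      ((Set.mem_insert_iff.mp (hCI hy)).resolve_left (fun e => h (e ▸ hy)))
    exact hC.1.1 (hI.indep.subset hsub)
  exact ⟨C, hC, hxC, hCI.trans (Set.insert_subset_insert hI.subset)⟩

lemma flat_of_closure_eq {M : Matroid α} {F : Set α} (hF : F ⊆ M.E)
    (h : M.closure F = F) : M.IsFlat F := by
  refine ⟨fun I X hI hIX => ?_, hF⟩
  have hX := hIX.subset_closure
  rwa [hI.closure_eq_closure, h] at hX

lemma restrict_closure_eq' {M : Matroid α} {R X : Set α} (hR : R ⊆ M.E) (hX : X ⊆ R) :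
    (M ↾ R).closure X = M.closure X ∩ R := by
  obtain ⟨I, hI⟩ := (M ↾ R).exists_isBasis X (by simpa using hX)
  have hIM : M.IsBasis I X := ((isBasis_restrict_iff hR).mp hI).1
  rw [← hI.closure_eq_closure, ← hIM.closure_eq_closure]
  have hIR : I ⊆ R := hI.subset.trans hX
  ext y
  rw [hI.indep.closure_eq_setOf_isBasis_insert, Set.mem_inter_iff,
    hIM.indep.closure_eq_setOf_isBasis_insert]
  simp only [Set.mem_setOf_eq]
  rw [isBasis_restrict_iff hR]
  constructor
  · rintro ⟨hb, hins⟩; exact ⟨hb, hins (Set.mem_insert _ _)⟩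
  · rintro ⟨hb, hyR⟩; exact ⟨hb, Set.insert_subset hyR hIR⟩

lemma circuit_restrict_iff {M : Matroid α} {R C : Set α} (hR : R ⊆ M.E) :
    Circuit (M ↾ R) C ↔ Circuit M C ∧ C ⊆ R := by
  constructor
  · rintro ⟨hdep, hmin⟩
    rw [restrict_dep_iff] at hdep
    exact ⟨⟨⟨hdep.1, hdep.2.trans hR⟩, fun D hD => (hmin D hD).of_restrict⟩, hdep.2⟩
  · rintro ⟨⟨hdep, hmin⟩, hCR⟩
    exact ⟨restrict_dep_iff.mpr ⟨hdep.1, hCR⟩,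
      fun D hD => (hmin D hD).indep_restrict_of_subset (hD.subset.trans hCR)⟩



lemma rk_eq_of_basis [Fintype α] {M : Matroid α} {I X : Set α} (hI : M.IsBasis I X) :
    rk M X = I.ncard := by
  have hne : (Set.ncard '' {J | M.Indep J ∧ J ⊆ X}).Nonempty :=
    ⟨(∅ : Set α).ncard, ∅, ⟨M.empty_indep, Set.empty_subset X⟩, rfl⟩
  apply le_antisymm
  · apply csSup_le hne
    rintro a ⟨J, ⟨hJ, hJX⟩, rfl⟩
    obtain ⟨I', hI', hJI'⟩ := hJ.subset_isBasis_of_subset hJX hI.subset_ground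
    have hcard : I'.ncard = I.ncard := by
      rw [Set.ncard_def, Set.ncard_def, hI'.encard_eq_encard hI]
    calc J.ncard ≤ I'.ncard := Set.ncard_le_ncard hJI' (Set.toFinite I')
      _ = I.ncard := hcard
  · apply le_csSup
    · refine ⟨Fintype.card α, ?_⟩
      rintro a ⟨J, _, rfl⟩
      calc J.ncard ≤ (Set.univ : Set α).ncard :=
            Set.ncard_le_ncard (Set.subset_univ J) (Set.toFinite _)
        _ = Fintype.card α := by rw [Set.ncard_univ, Nat.card_eq_fintype_card]
    · exact ⟨I, ⟨hI.indep, hI.subset⟩, rfl⟩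

lemma rk_insert_of_not_mem_closure [Fintype α] {M : Matroid α} {X : Set α} {x : α}
    (hX : X ⊆ M.E) (hxE : x ∈ M.E) (hx : x ∉ M.closure X) :
    rk M (insert x X) = rk M X + 1 := by
  obtain ⟨I, hI⟩ := M.exists_isBasis X hX
  have hxX : x ∉ X := fun h => hx (M.subset_closure X hX h)
  have hxI : x ∉ I := fun h => hxX (hI.subset h)
  have hxclI : x ∉ M.closure I := by rwa [hI.closure_eq_closure]
  have hind : M.Indep (insert x I) :=
    (hI.indep.insert_indep_iff_of_notMem hxI).mpr ⟨hxE, hxclI⟩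
  have hbas : M.IsBasis (insert x I) (insert x X) := by
    apply hind.isBasis_of_subset_of_subset_closure (Set.insert_subset_insert hI.subset)
    intro y hy
    rcases hy with rfl | hy
    · exact M.subset_closure _ hind.subset_ground (Set.mem_insert _ _)
    · exact M.closure_subset_closure (Set.subset_insert x I) (hI.subset_closure hy)
  rw [rk_eq_of_basis hbas, rk_eq_of_basis hI,
    Set.ncard_insert_of_notMem hxI (Set.toFinite I)]

lemma rk_add_card_eq [Fintype α] [DecidableEq α] (N : Matroid α) :
    ∀ (n : ℕ) (Z K : Finset α), (Z \ K).card ≤ n → K ⊆ Z → ↑Z ⊆ N.E →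
      (∀ x ∈ Z, x ∉ K → x ∉ N.closure (↑Z \ {x})) →
      rk N ↑Z + K.card = rk N ↑K + Z.card := by
  intro n
  induction n with
  | zero =>
    intro Z K hn hKZ _ _
    have hZK : Z = K := by
      apply Finset.Subset.antisymm _ hKZ
      intro x hx
      by_contra h
      have hmem : x ∈ Z \ K := Finset.mem_sdiff.mpr ⟨hx, h⟩
      rw [Finset.card_eq_zero.mp (Nat.le_zero.mp hn)] at hmem
      exact absurd hmem (Finset.notMem_empty x)
    rw [hZK]
  | succ n ih =>
    intro Z K hn hKZ hZE hcol
    by_cases hemp : Z \ K = ∅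
    · have hZK : Z = K := by
        apply Finset.Subset.antisymm _ hKZ
        intro x hx
        by_contra h
        have hmem : x ∈ Z \ K := Finset.mem_sdiff.mpr ⟨hx, h⟩
        rw [hemp] at hmem
        exact absurd hmem (Finset.notMem_empty x)
      rw [hZK]
    · obtain ⟨x, hx⟩ := Finset.nonempty_iff_ne_empty.mpr hemp
      obtain ⟨hxZ, hxK⟩ := Finset.mem_sdiff.mp hx
      set Z' := Z.erase x with hZ'
      have hKZ' : K ⊆ Z' := fun y hy =>
        Finset.mem_erase.mpr ⟨fun h => hxK (h ▸ hy), hKZ hy⟩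
      have hcoe : (↑Z' : Set α) = ↑Z \ {x} := Finset.coe_erase x Z
      have hZ'E : (↑Z' : Set α) ⊆ N.E := by
        rw [hcoe]; exact Set.diff_subset.trans hZE
      have hins : insert x (↑Z' : Set α) = ↑Z := by
        rw [hcoe, Set.insert_diff_singleton, Set.insert_eq_of_mem (by exact_mod_cast hxZ)]
      have hrk : rk N ↑Z = rk N ↑Z' + 1 := by
        rw [← hins]
        exact rk_insert_of_not_mem_closure hZ'E (hZE (by exact_mod_cast hxZ))
          (by rw [hcoe]; exact hcol x hxZ hxK)
      have hsd : Z' \ K = (Z \ K).erase x := by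
        rw [hZ', Finset.erase_sdiff_comm]
      have hcard : (Z' \ K).card ≤ n := by
        rw [hsd, Finset.card_erase_of_mem hx]
        omega
      have hcol' : ∀ y ∈ Z', y ∉ K → y ∉ N.closure (↑Z' \ {y}) := by
        intro y hy hyK hmem
        refine hcol y (Finset.mem_of_mem_erase hy) hyK ?_
        refine N.closure_subset_closure ?_ hmem
        rw [hcoe]
        exact Set.diff_subset_diff_left Set.diff_subset
      have := ih Z' K hcard hKZ' hZ'E hcol'
      have hce : Z'.card + 1 = Z.card := Finset.card_erase_add_one hxZ
      omega



lemma gamma_eq [Fintype α] [DecidableEq α] (N : Matroid α) (X : Finset α) :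
    gamma N X = nullity N ↑X -
      ∑ Z ∈ Finset.univ.filter (fun Z : Finset α => CyclicFlat N ↑Z ∧ Z ⊂ X), gamma N Z := by
  rw [gamma]
  congr 1
  exact Finset.sum_attach _ _

theorem statement_10 (M : Matroid α) (e : α) (he : e ∈ M.E)
    (Z0 : Finset α) (h0 : CyclicFlat M ↑Z0) :
    CyclicFlat (deleteElem M e) ↑(Z0.erase e) ∨
      gamma (deleteElem M e) (Z0.erase e) = 0 := by
  obtain ⟨hcyc, hflat⟩ := h0
  have hZ0E : (↑Z0 : Set α) ⊆ M.E := hcyc.1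
  set R : Set α := M.E \ {e} with hRdef
  have hR : R ⊆ M.E := Set.diff_subset
  have hground : (deleteElem M e).E = R := rfl
  by_cases he0 : e ∈ Z0
  · -- e ∈ Z0
    set Z : Finset α := Z0.erase e with hZdef
    have hZcoe : (↑Z : Set α) = ↑Z0 \ {e} := Finset.coe_erase e Z0
    have hZsub : (↑Z : Set α) ⊆ R := by
      rw [hZcoe]; exact Set.diff_subset_diff_left hZ0E
    have hZE : (↑Z : Set α) ⊆ M.E := hZsub.trans hR
    -- closure of Z in M is Z0
    have hclZ : M.closure ↑Z = ↑Z0 := by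
      obtain ⟨C, hC, hCZ0, heC⟩ := hcyc.2 e (by exact_mod_cast he0)
      have hecl : e ∈ M.closure ↑Z := by
        have h1 : e ∈ M.closure (C \ {e}) := hC.subset_closure_diff heC heC
        refine M.closure_subset_closure ?_ h1
        rw [hZcoe]; exact Set.diff_subset_diff_left hCZ0
      apply Set.Subset.antisymm
      · rw [← hflat.closure]
        exact M.closure_subset_closure (hZcoe ▸ Set.diff_subset)
      · intro y hy
        rcases eq_or_ne y e with rfl | hne
        · exact hecl
        · exact M.subset_closure _ hZE (by rw [hZcoe]; exact ⟨hy, hne⟩)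
    have hclZ' : (M ↾ R).closure ↑Z = ↑Z := by
      rw [restrict_closure_eq' hR hZsub, hclZ, hRdef]
      rw [Set.diff_eq, ← Set.inter_assoc, Set.inter_eq_left.mpr hZ0E, ← Set.diff_eq, ← hZcoe]
    have hflatZ : (M ↾ R).IsFlat ↑Z := flat_of_closure_eq (by rw [hground] at *; exact hZsub) hclZ'
    by_cases hcyc' : Cyclic (deleteElem M e) ↑Z
    · exact Or.inl ⟨hcyc', hflatZ⟩
    · -- Z is a flat of M' but not cyclic; show gamma = 0
      right
      have hnotall : ¬ ∀ x ∈ (↑Z : Set α), ∃ C, Circuit (M ↾ R) C ∧ C ⊆ ↑Z ∧ x ∈ C := by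
        intro h
        exact hcyc' ⟨hZsub, h⟩
      push_neg at hnotall
      obtain ⟨x0, hx0Z, hx0⟩ := hnotall
      set K : Finset α := Z.filter
        (fun x => ∃ C : Set α, Circuit (M ↾ R) C ∧ C ⊆ ↑Z ∧ x ∈ C) with hKdef
      have hKZ : K ⊆ Z := Finset.filter_subset _ _
      have hKmem : ∀ x : α, x ∈ K ↔ x ∈ Z ∧ ∃ C : Set α,
          Circuit (M ↾ R) C ∧ C ⊆ ↑Z ∧ x ∈ C := by
        intro x; rw [hKdef, Finset.mem_filter]
      have hKsub : (↑K : Set α) ⊆ ↑Z := by exact_mod_cast hKZ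
      have hKcyc : Cyclic (M ↾ R) ↑K := by
        refine ⟨hKsub.trans hZsub, fun x hx => ?_⟩
        obtain ⟨hxZ, C, hC, hCZ, hxC⟩ := (hKmem x).mp (by exact_mod_cast hx)
        refine ⟨C, hC, fun y hy => ?_, hxC⟩
        have hyZ : y ∈ Z := by exact_mod_cast hCZ hy
        exact Finset.mem_coe.mpr ((hKmem y).mpr ⟨hyZ, C, hC, hCZ, hy⟩)
      have hx0K : x0 ∉ K := by
        intro h
        obtain ⟨_, C, hC, hCZ, hxC⟩ := (hKmem x0).mp h
        exact hx0 C hC hCZ hxC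
      have hKne : K ≠ Z := fun h => hx0K (h ▸ (by exact_mod_cast hx0Z))
      have hKssub : K ⊂ Z := lt_of_le_of_ne hKZ hKne
      -- K is a flat of M ↾ R
      have hKflat : (M ↾ R).IsFlat ↑K := by
        refine flat_of_closure_eq (hKsub.trans hZsub) (Set.Subset.antisymm ?_ ?_)
        · intro y hy
          have hyZ : y ∈ (↑Z : Set α) := by
            rw [← hclZ']
            exact (M ↾ R).closure_subset_closure hKsub hy
          by_contra hyK
          obtain ⟨C, hC, hyC, hCsub⟩ :=
            exists_circuit_of_mem_closure (M := M ↾ R) (hKsub.trans hZsub) hy hyK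
          have hCZ : C ⊆ (↑Z : Set α) :=
            hCsub.trans (Set.insert_subset hyZ hKsub)
          exact hyK (Finset.mem_coe.mpr ((hKmem y).mpr
            ⟨by exact_mod_cast hyZ, C, hC, hCZ, hyC⟩))
        · exact (M ↾ R).subset_closure _ (hKsub.trans hZsub)
      -- coloop property
      have hcol : ∀ x ∈ Z, x ∉ K → x ∉ (M ↾ R).closure (↑Z \ {x}) := by
        intro x hxZ hxK hmem
        have hxnot : x ∉ (↑Z : Set α) \ {x} := fun h => h.2 rfl
        obtain ⟨C, hC, hxC, hCsub⟩ :=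
          exists_circuit_of_mem_closure (M := M ↾ R)
            ((Set.diff_subset.trans hZsub)) hmem hxnot
        have hCZ : C ⊆ (↑Z : Set α) := by
          refine hCsub.trans ?_
          rw [Set.insert_diff_singleton, Set.insert_eq_of_mem (by exact_mod_cast hxZ)]
        exact hxK ((hKmem x).mpr ⟨hxZ, C, hC, hCZ, hxC⟩)
      have hrk : rk (M ↾ R) ↑Z + K.card = rk (M ↾ R) ↑K + Z.card :=
        rk_add_card_eq (M ↾ R) (Z \ K).card Z K le_rfl hKZ hZsub hcol
      have hnull : nullity (M ↾ R) ↑Z = nullity (M ↾ R) ↑K := by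
        rw [nullity, nullity, Set.ncard_coe_finset, Set.ncard_coe_finset]
        have : (rk (M ↾ R) ↑Z : ℤ) + K.card = rk (M ↾ R) ↑K + Z.card := by
          exact_mod_cast hrk
        linarith
      -- the filter over Z equals insert K (filter over K)
      have hfilter : Finset.univ.filter
            (fun W : Finset α => CyclicFlat (M ↾ R) ↑W ∧ W ⊂ Z)
          = insert K (Finset.univ.filter
            (fun W : Finset α => CyclicFlat (M ↾ R) ↑W ∧ W ⊂ K)) := by
        ext W
        simp only [Finset.mem_filter, Finset.mem_univ, true_and, Finset.mem_insert]
        constructor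
        · rintro ⟨hWcf, hWZ⟩
          have hWK : W ⊆ K := by
            intro y hy
            obtain ⟨C, hC, hCW, hyC⟩ := hWcf.1.2 y (by exact_mod_cast hy)
            have hWsub : (↑W : Set α) ⊆ ↑Z := by exact_mod_cast hWZ.subset
            refine (hKmem y).mpr ⟨by exact_mod_cast hWsub (by exact_mod_cast hy),
              C, hC, hCW.trans hWsub, hyC⟩
          rcases eq_or_ne W K with rfl | hne
          · exact Or.inl rfl
          · exact Or.inr ⟨hWcf, lt_of_le_of_ne hWK hne⟩
        · rintro (rfl | ⟨hWcf, hWK⟩)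
          · exact ⟨⟨hKcyc, hKflat⟩, hKssub⟩
          · exact ⟨hWcf, hWK.trans hKssub⟩
      have hKnotmem : K ∉ Finset.univ.filter
          (fun W : Finset α => CyclicFlat (M ↾ R) ↑W ∧ W ⊂ K) := by
        simp only [Finset.mem_filter]
        rintro ⟨-, -, h⟩
        exact h.2 le_rfl
      have hsumK : ∑ W ∈ Finset.univ.filter
            (fun W : Finset α => CyclicFlat (M ↾ R) ↑W ∧ W ⊂ K), gamma (M ↾ R) W
          = nullity (M ↾ R) ↑K - gamma (M ↾ R) K := by
        have := gamma_eq (M ↾ R) K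
        linarith
      have hgz : gamma (M ↾ R) Z = 0 := by
        rw [gamma_eq, hfilter, Finset.sum_insert (by exact hKnotmem), hsumK, hnull]
        ring
      exact hgz
  · -- e ∉ Z0
    left
    rw [Finset.erase_eq_of_notMem he0]
    have hsub : (↑Z0 : Set α) ⊆ R := by
      intro x hx
      exact ⟨hZ0E hx, fun h => he0 (by exact_mod_cast h ▸ hx)⟩
    refine ⟨⟨hsub, fun x hx => ?_⟩, ?_⟩
    · obtain ⟨C, hC, hCZ0, hxC⟩ := hcyc.2 x hx
      exact ⟨C, (circuit_restrict_iff hR).mpr ⟨hC, hCZ0.trans hsub⟩, hCZ0, hxC⟩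
    · refine flat_of_closure_eq (by rw [hground]; exact hsub) ?_
      show (M ↾ R).closure ↑Z0 = ↑Z0
      rw [restrict_closure_eq' hR hsub, hflat.closure]
      exact Set.inter_eq_left.mpr hsub

end Paper
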